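/- Let Y ∈ ℝ^{n×d} with YᵀY = I and rows y_i satisfying Σ_i(‖y_i‖² − d/n)² ≤ d²/n. Let H ∈ ℝ^{n×n} be symmetric with ‖H‖_F = √k, let Δ = (1/(2α))diag(‖y_i‖²) for α > 0, and let a be a unit eigenvector of B = YᵀHY with eigenvalue λ ∈ [0,1]. Then |aᵀ Yᵀ (Δ(λI − H) + (λI − H)Δ) Y a| ≤ (1/√n)·(d/α)·(λ + √k). -/
import Mathlib


open Matrix

set_option maxHeartbeats 1000000

theorem perturbation_quadratic_bound (n d k : ℕ) (hn : 0 < n) (α : ℝ) (hα : 0 < α)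
    (Y : Matrix (Fin n) (Fin d) ℝ) (hY : Yᵀ * Y = 1)
    (H : Matrix (Fin n) (Fin n) ℝ) (hH : Hᵀ = H)
    (hHF : Real.sqrt ((H * Hᵀ).trace) = Real.sqrt (k : ℝ))
    (hsd : ∑ i, ((∑ j, (Y i j) ^ 2) - (d : ℝ) / n) ^ 2 ≤ (d : ℝ) ^ 2 / n)
    (a : Fin d → ℝ) (ha : Real.sqrt (∑ j, (a j) ^ 2) = 1)
    (lam : ℝ) (hlam0 : 0 ≤ lam) (hlam1 : lam ≤ 1)
    (heig : (Yᵀ * H * Y) *ᵥ a = lam • a) :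
    |a ⬝ᵥ ((Yᵀ *
        (((1 / (2 * α)) • Matrix.diagonal fun i => ∑ j, (Y i j) ^ 2) *
            (lam • (1 : Matrix (Fin n) (Fin n) ℝ) - H) +
          (lam • (1 : Matrix (Fin n) (Fin n) ℝ) - H) *
            ((1 / (2 * α)) • Matrix.diagonal fun i => ∑ j, (Y i j) ^ 2)) * Y) *ᵥ a)|
      ≤ (1 / Real.sqrt n) * ((d : ℝ) / α) * (lam + Real.sqrt k) := by
  set Dv : Fin n → ℝ := fun i => ∑ j, (Y i j) ^ 2 with hDvdef
  set M : Matrix (Fin n) (Fin n) ℝ := lam • (1 : Matrix (Fin n) (Fin n) ℝ) - H with hMdef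
  set x : Fin n → ℝ := Y *ᵥ a with hxdef
  have hDvi : ∀ i, Dv i = ∑ j, (Y i j) ^ 2 := fun i => rfl
  -- transfer quadratic forms through Y
  have key : ∀ A : Matrix (Fin n) (Fin n) ℝ,
      a ⬝ᵥ ((Yᵀ * A * Y) *ᵥ a) = x ⬝ᵥ (A *ᵥ x) := by
    intro A
    rw [← Matrix.mulVec_mulVec, ← Matrix.mulVec_mulVec, Matrix.dotProduct_mulVec,
      Matrix.vecMul_transpose]
  have ha2 : ∑ j, (a j) ^ 2 = 1 := by
    have h0 : (0 : ℝ) ≤ ∑ j, (a j) ^ 2 := Finset.sum_nonneg fun _ _ => sq_nonneg _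
    nlinarith [Real.sq_sqrt h0]
  have haa : a ⬝ᵥ a = 1 := by simpa [dotProduct, ← sq] using ha2
  have hx2 : x ⬝ᵥ x = 1 := by
    have h := (key 1).symm
    simpa [Matrix.mul_one, hY, Matrix.one_mulVec, haa] using h
  have hx2sum : ∑ i, (x i) ^ 2 = 1 := by simpa [dotProduct, ← sq] using hx2
  have hlx : x ⬝ᵥ (H *ᵥ x) = lam := by
    have h := (key H).symm
    rw [heig] at h
    simpa [dotProduct_smul, haa, smul_eq_mul] using h
  have hlxsum : ∑ i, x i * (H *ᵥ x) i = lam := by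
    simpa [dotProduct] using hlx
  set m : Fin n → ℝ := M *ᵥ x with hmdef
  have hmi : ∀ i, m i = lam * x i - (H *ᵥ x) i := by
    intro i
    rw [hmdef, hMdef]
    simp [Matrix.sub_mulVec, Matrix.smul_mulVec, Matrix.one_mulVec]
  have hMsym : Mᵀ = M := by
    rw [hMdef]
    simp [Matrix.transpose_sub, Matrix.transpose_smul, Matrix.transpose_one, hH]
  have hxm : x ⬝ᵥ m = 0 := by
    have h1 : x ⬝ᵥ m = ∑ i, (lam * (x i) ^ 2 - x i * (H *ᵥ x) i) := by
      simp only [dotProduct]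
      exact Finset.sum_congr rfl fun i _ => by rw [hmi i]; ring
    rw [h1, Finset.sum_sub_distrib, ← Finset.mul_sum, hx2sum, hlxsum]
    ring
  -- trace fact
  have hk : ∑ i, ∑ j, (H i j) ^ 2 = (k : ℝ) := by
    have ht : (H * Hᵀ).trace = ∑ i, ∑ j, (H i j) ^ 2 := by
      simp [Matrix.trace, Matrix.diag, Matrix.mul_apply, sq]
    have hnn : (0 : ℝ) ≤ ∑ i, ∑ j, (H i j) ^ 2 := by positivity
    rw [ht] at hHF
    calc ∑ i, ∑ j, (H i j) ^ 2 = Real.sqrt (∑ i, ∑ j, (H i j) ^ 2) ^ 2 :=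
          (Real.sq_sqrt hnn).symm
      _ = Real.sqrt (k : ℝ) ^ 2 := by rw [hHF]
      _ = (k : ℝ) := Real.sq_sqrt (Nat.cast_nonneg k)
  -- bound on ‖Hx‖²
  have hHx : ∑ i, ((H *ᵥ x) i) ^ 2 ≤ (k : ℝ) := by
    calc ∑ i, ((H *ᵥ x) i) ^ 2 ≤ ∑ i, ∑ j, (H i j) ^ 2 := by
          apply Finset.sum_le_sum
          intro i _
          have hcs := Finset.sum_mul_sq_le_sq_mul_sq Finset.univ (fun j => H i j) x
          simpa [Matrix.mulVec, dotProduct, hx2sum] using hcs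
      _ = (k : ℝ) := hk
  -- bound on ‖m‖²
  have hB : ∑ i, (m i) ^ 2 ≤ (k : ℝ) := by
    have hexp : ∑ i, (m i) ^ 2
        = ∑ i, (lam ^ 2 * (x i) ^ 2 - 2 * lam * (x i * (H *ᵥ x) i) + ((H *ᵥ x) i) ^ 2) :=
      Finset.sum_congr rfl fun i _ => by rw [hmi i]; ring
    rw [hexp, Finset.sum_add_distrib, Finset.sum_sub_distrib, ← Finset.mul_sum, ← Finset.mul_sum,
      hx2sum, hlxsum]
    nlinarith [sq_nonneg lam, hHx]
  -- bound on deviation part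
  have hA : ∑ i, ((Dv i - (d : ℝ) / n) * x i) ^ 2 ≤ (d : ℝ) ^ 2 / n := by
    calc ∑ i, ((Dv i - (d : ℝ) / n) * x i) ^ 2
        ≤ ∑ i, (Dv i - (d : ℝ) / n) ^ 2 := by
          apply Finset.sum_le_sum
          intro i _
          have hxi : (x i) ^ 2 ≤ 1 := by
            have h1 : (x i) ^ 2 ≤ ∑ j, (x j) ^ 2 :=
              Finset.single_le_sum (fun j _ => sq_nonneg (x j)) (Finset.mem_univ i)
            rwa [hx2sum] at h1
          have := sq_nonneg (Dv i - (d : ℝ) / n)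
          rw [mul_pow]
          nlinarith
      _ ≤ (d : ℝ) ^ 2 / n := by simpa [hDvi] using hsd
  -- Cauchy–Schwarz on the deviation sum
  have hT : |∑ i, (Dv i - (d : ℝ) / n) * (x i * m i)|
      ≤ ((d : ℝ) / Real.sqrt n) * Real.sqrt k := by
    have heq : ∑ i, (Dv i - (d : ℝ) / n) * (x i * m i)
        = ∑ i, ((Dv i - (d : ℝ) / n) * x i) * m i :=
      Finset.sum_congr rfl fun i _ => by ring
    have hcs := Finset.sum_mul_sq_le_sq_mul_sq Finset.univ
      (fun i => (Dv i - (d : ℝ) / n) * x i) m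
    have hsq : (∑ i, ((Dv i - (d : ℝ) / n) * x i) * m i) ^ 2 ≤ ((d : ℝ) ^ 2 / n) * k := by
      refine le_trans hcs ?_
      have h1 : (0 : ℝ) ≤ ∑ i, (m i) ^ 2 := Finset.sum_nonneg fun _ _ => sq_nonneg _
      have h2 : (0 : ℝ) ≤ (d : ℝ) ^ 2 / n := by positivity
      exact mul_le_mul hA hB h1 h2
    rw [heq, ← Real.sqrt_sq_eq_abs]
    calc Real.sqrt ((∑ i, ((Dv i - (d : ℝ) / n) * x i) * m i) ^ 2)
        ≤ Real.sqrt (((d : ℝ) ^ 2 / n) * k) := Real.sqrt_le_sqrt hsq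
      _ = ((d : ℝ) / Real.sqrt n) * Real.sqrt k := by
          rw [Real.sqrt_mul (by positivity), Real.sqrt_div (by positivity),
            Real.sqrt_sq (by positivity)]
  -- reduce the goal to the deviation sum
  rw [key]
  have hquad : x ⬝ᵥ (((1 / (2 * α)) • Matrix.diagonal Dv * M
      + M * ((1 / (2 * α)) • Matrix.diagonal Dv)) *ᵥ x)
      = (1 / α) * ∑ i, (Dv i - (d : ℝ) / n) * (x i * m i) := by
    have t1 : x ⬝ᵥ (((1 / (2 * α)) • Matrix.diagonal Dv * M) *ᵥ x)
        = (1 / (2 * α)) * ∑ i, x i * (Dv i * m i) := by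
      rw [← Matrix.mulVec_mulVec, Matrix.smul_mulVec, dotProduct_smul]
      simp [dotProduct, Matrix.mulVec_diagonal, ← hmdef, smul_eq_mul]
    have t2 : x ⬝ᵥ ((M * ((1 / (2 * α)) • Matrix.diagonal Dv)) *ᵥ x)
        = (1 / (2 * α)) * ∑ i, m i * (Dv i * x i) := by
      rw [← Matrix.mulVec_mulVec, Matrix.dotProduct_mulVec, ← Matrix.mulVec_transpose, hMsym,
        ← hmdef, Matrix.smul_mulVec, dotProduct_smul]
      simp [dotProduct, Matrix.mulVec_diagonal, smul_eq_mul]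
    rw [Matrix.add_mulVec, dotProduct_add, t1, t2]
    have hsum : ∑ i, (Dv i - (d : ℝ) / n) * (x i * m i)
        = ∑ i, Dv i * (x i * m i) - (d : ℝ) / n * (x ⬝ᵥ m) := by
      simp only [dotProduct, Finset.mul_sum, ← Finset.sum_sub_distrib]
      exact Finset.sum_congr rfl fun i _ => by ring
    rw [hsum, hxm]
    have e1 : ∑ i, x i * (Dv i * m i) = ∑ i, Dv i * (x i * m i) :=
      Finset.sum_congr rfl fun i _ => by ring
    have e2 : ∑ i, m i * (Dv i * x i) = ∑ i, Dv i * (x i * m i) :=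
      Finset.sum_congr rfl fun i _ => by ring
    rw [e1, e2]
    field_simp
    ring
  rw [hquad]
  have hrhs : (1 / Real.sqrt n) * ((d : ℝ) / α) * (lam + Real.sqrt k)
      = (1 / α) * (((d : ℝ) / Real.sqrt n) * (lam + Real.sqrt k)) := by ring
  rw [hrhs, abs_mul, abs_of_pos (by positivity : (0 : ℝ) < 1 / α)]
  apply mul_le_mul_of_nonneg_left _ (by positivity)
  calc |∑ i, (Dv i - (d : ℝ) / n) * (x i * m i)|
      ≤ ((d : ℝ) / Real.sqrt n) * Real.sqrt k := hT
    _ ≤ ((d : ℝ) / Real.sqrt n) * (lam + Real.sqrt k) := by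
        apply mul_le_mul_of_nonneg_left _ (by positivity)
        linarith [Real.sqrt_nonneg (k : ℝ)]
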